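/- Let σ > 0, C ≠ 0, T > 0, and let y : [0,T] → ℝ be differentiable with y(0) = −σ and y′(t) ≤ −y(t)² + (C/2) y(t) for all t ∈ [0,T]. Assume that 1 − (2σ/C)(e^{Ct/2} − 1) > 0 for all t ∈ [0,T]. Then for all t ∈ [0,T], y(t) ≤ −σ e^{Ct/2} / (1 − (2σ/C)(e^{Ct/2} − 1)). -/

import Mathlib

open Set

/-- Explicit comparison bound for the Riccati differential inequality
`y' ≤ -y² + (C/2) y`, `y 0 = -σ`, on a time interval where the denominator
`1 - (2σ/C)(e^{Ct/2} - 1)` stays positive. -/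
theorem riccati_inequality_comparison_bound
    (σ C T : ℝ) (hσ : 0 < σ) (hC : C ≠ 0) (hT : 0 < T)
    (y y' : ℝ → ℝ) (hy0 : y 0 = -σ)
    (hderiv : ∀ t ∈ Set.Icc (0:ℝ) T, HasDerivWithinAt y (y' t) (Set.Icc 0 T) t)
    (hineq : ∀ t ∈ Set.Icc (0:ℝ) T, y' t ≤ -(y t)^2 + (C / 2) * y t)
    (hden : ∀ t ∈ Set.Icc (0:ℝ) T, 0 < 1 - (2 * σ / C) * (Real.exp (C * t / 2) - 1)) :
    ∀ t ∈ Set.Icc (0:ℝ) T,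
      y t ≤ -σ * Real.exp (C * t / 2) / (1 - (2 * σ / C) * (Real.exp (C * t / 2) - 1)) := by
  have hconv : Convex ℝ (Set.Icc (0:ℝ) T) := convex_Icc 0 T
  have hint : interior (Set.Icc (0:ℝ) T) = Set.Ioo 0 T := interior_Icc
  -- Step 1: w t = exp(-C t/2) * y t is antitone, hence y t ≤ -σ exp(C t/2) < 0.
  set w : ℝ → ℝ := fun t => Real.exp (-(C * t) / 2) * y t with hw
  have hwderiv : ∀ t ∈ Set.Icc (0:ℝ) T, HasDerivWithinAt w
      (Real.exp (-(C * t) / 2) * (y' t - (C / 2) * y t)) (Set.Icc 0 T) t := by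
    intro t ht
    have h1 : HasDerivWithinAt (fun s => Real.exp (-(C * s) / 2))
        (Real.exp (-(C * t) / 2) * (-(C) / 2)) (Set.Icc 0 T) t := by
      have : HasDerivAt (fun s => Real.exp (-(C * s) / 2))
          (Real.exp (-(C * t) / 2) * (-(C) / 2)) t := by
        have h2 : HasDerivAt (fun s : ℝ => -(C * s) / 2) (-(C) / 2) t := by
          simpa using ((hasDerivAt_id t).const_mul C).neg.div_const 2
        exact (Real.hasDerivAt_exp _).comp t h2
      exact this.hasDerivWithinAt
    have := h1.mul (hderiv t ht)
    refine this.congr_deriv ?_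
    ring
  have hwanti : AntitoneOn w (Set.Icc (0:ℝ) T) := by
    apply antitoneOn_of_hasDerivWithinAt_nonpos hconv
    · intro t ht; exact (hwderiv t ht).continuousWithinAt
    · intro t ht
      exact (hwderiv t (interior_subset ht)).mono interior_subset
    · intro t ht
      have ht' : t ∈ Set.Icc (0:ℝ) T := interior_subset ht
      have h1 := hineq t ht'
      have h2 : (0:ℝ) < Real.exp (-(C * t) / 2) := Real.exp_pos _
      nlinarith [sq_nonneg (y t)]
  have hyneg : ∀ t ∈ Set.Icc (0:ℝ) T, y t ≤ -σ * Real.exp (C * t / 2) := by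
    intro t ht
    have h0 : (0:ℝ) ∈ Set.Icc (0:ℝ) T := ⟨le_refl 0, le_of_lt hT⟩
    have := hwanti h0 ht ht.1
    simp only [hw] at this
    rw [hy0] at this
    simp at this
    have hE : (0:ℝ) < Real.exp (-(C * t) / 2) := Real.exp_pos _
    have hEe : Real.exp (-(C * t) / 2) * Real.exp (C * t / 2) = 1 := by
      rw [← Real.exp_add]; ring_nf; exact Real.exp_zero
    nlinarith
  have hylt : ∀ t ∈ Set.Icc (0:ℝ) T, y t < 0 := by
    intro t ht
    have := hyneg t ht
    nlinarith [Real.exp_pos (C * t / 2)]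
  -- Step 2: g t = exp(C t/2) / y t - (2/C)(exp(C t/2) - 1) is monotone.
  set g : ℝ → ℝ := fun t => Real.exp (C * t / 2) * (y t)⁻¹
      - (2 / C) * (Real.exp (C * t / 2) - 1) with hg
  have hgderiv : ∀ t ∈ Set.Icc (0:ℝ) T, HasDerivWithinAt g
      ((C / 2) * Real.exp (C * t / 2) * (y t)⁻¹
        + Real.exp (C * t / 2) * (-(y' t) / (y t) ^ 2)
        - (2 / C) * ((C / 2) * Real.exp (C * t / 2))) (Set.Icc 0 T) t := by
    intro t ht
    have hE : HasDerivWithinAt (fun s => Real.exp (C * s / 2))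
        ((C / 2) * Real.exp (C * t / 2)) (Set.Icc 0 T) t := by
      have h2 : HasDerivAt (fun s : ℝ => C * s / 2) (C / 2) t := by
        simpa using ((hasDerivAt_id t).const_mul C).div_const 2
      have := (Real.hasDerivAt_exp (C * t / 2)).comp t h2
      exact this.hasDerivWithinAt.congr_deriv (by ring)
    have hinv : HasDerivWithinAt (fun s => (y s)⁻¹) (-(y' t) / (y t) ^ 2)
        (Set.Icc 0 T) t := (hderiv t ht).inv (ne_of_lt (hylt t ht))
    exact ((hE.mul hinv).sub ((hE.sub_const 1).const_mul (2 / C))).congr_deriv (by ring)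
  have hgmono : MonotoneOn g (Set.Icc (0:ℝ) T) := by
    apply monotoneOn_of_hasDerivWithinAt_nonneg hconv
    · intro t ht; exact (hgderiv t ht).continuousWithinAt
    · intro t ht
      exact (hgderiv t (interior_subset ht)).mono interior_subset
    · intro t ht
      have ht' : t ∈ Set.Icc (0:ℝ) T := interior_subset ht
      have h1 := hineq t ht'
      have hy := hylt t ht'
      have hy2 : (0:ℝ) < (y t) ^ 2 := by nlinarith
      have hE : (0:ℝ) < Real.exp (C * t / 2) := Real.exp_pos _
      have hyinv : (y t)⁻¹ * y t = 1 := inv_mul_cancel₀ (ne_of_lt hy)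
      have key : (0:ℝ) ≤ (C / 2) * (y t)⁻¹ + (-(y' t) / (y t) ^ 2) - 1 := by
        have expand : (C / 2) * (y t)⁻¹ + (-(y' t) / (y t) ^ 2) - 1
            = (-(y t)^2 + (C / 2) * y t - y' t) / (y t) ^ 2 := by
          have hyne : y t ≠ 0 := ne_of_lt hy
          field_simp
          ring
        rw [expand]
        apply div_nonneg
        · linarith
        · positivity
      have : (C / 2) * Real.exp (C * t / 2) * (y t)⁻¹
          + Real.exp (C * t / 2) * (-(y' t) / (y t) ^ 2)
          - (2 / C) * ((C / 2) * Real.exp (C * t / 2))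
          = Real.exp (C * t / 2) * ((C / 2) * (y t)⁻¹ + (-(y' t) / (y t) ^ 2) - 1) := by
        field_simp
      rw [this]
      exact mul_nonneg hE.le key
  -- Step 3: conclude.
  intro t ht
  have h0 : (0:ℝ) ∈ Set.Icc (0:ℝ) T := ⟨le_refl 0, le_of_lt hT⟩
  have hg0 : g 0 = -(1/σ) := by
    simp only [hg, hy0, mul_zero, zero_div, Real.exp_zero, sub_self, mul_zero, one_mul]
    field_simp
    ring
  have hmono := hgmono h0 ht ht.1
  rw [hg0] at hmono
  simp only [hg] at hmono
  have hy := hylt t ht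
  have hD := hden t ht
  have hE : (0:ℝ) < Real.exp (C * t / 2) := Real.exp_pos _
  set E := Real.exp (C * t / 2)
  set D := 1 - (2 * σ / C) * (E - 1) with hDdef
  -- From hmono: E * (y t)⁻¹ ≥ -1/σ + (2/C)(E - 1) = -D/σ
  have hmono' : -(1/σ) + (2 / C) * (E - 1) ≤ E * (y t)⁻¹ := by
    linarith [hmono]
  have hDval : -(D / σ) = -(1/σ) + (2 / C) * (E - 1) := by
    rw [hDdef]
    field_simp
    ring
  have hmono'' : -(D / σ) ≤ E * (y t)⁻¹ := by rw [hDval]; exact hmono'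
  have hyinv : (y t)⁻¹ * y t = 1 := inv_mul_cancel₀ (ne_of_lt hy)
  have hyne : y t ≠ 0 := ne_of_lt hy
  have h2 : (0:ℝ) ≤ (E * (y t)⁻¹ + D / σ) * (σ * (-(y t))) :=
    mul_nonneg (by linarith) (by nlinarith)
  have h3 : (E * (y t)⁻¹ + D / σ) * (σ * (-(y t))) = -σ * E - D * y t := by
    field_simp
    ring
  rw [le_div_iff₀ hD]
  linarith [h3 ▸ h2]
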